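/- The evaluation map M → M'' from a semi-normed ℤ-module to its double dual, m ↦ (f ↦ f(m)), is isometric (‖ev(m)‖ = ‖m‖ for all m); if the semi-norm on M is a norm, the evaluation map is injective. -/

import Mathlib

/-- Boundedness of an additive functional relative to a semi-norm `ν`. -/
def Bdd {M : Type*} [AddCommGroup M] (ν : M → ℝ) (f : M →+ ℝ) : Prop :=
  ∃ c : ℝ, 0 ≤ c ∧ ∀ m : M, |f m| ≤ c * ν m

/-- The operator (semi-)norm of an additive functional relative to `ν`. -/
noncomputable def opN {M : Type*} [AddCommGroup M] (ν : M → ℝ) (f : M →+ ℝ) : ℝ :=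
  sInf {c : ℝ | 0 ≤ c ∧ ∀ m : M, |f m| ≤ c * ν m}

/-- The norm of the image of `m` under the evaluation map `M → M''`, that is the
operator norm of `f ↦ f m` on the dual `M'` (bounded functionals with the operator
norm). -/
noncomputable def evalNorm {M : Type*} [AddCommGroup M] (ν : M → ℝ) (m : M) : ℝ :=
  sInf {c : ℝ | 0 ≤ c ∧ ∀ f : M →+ ℝ, Bdd ν f → |f m| ≤ c * opN ν f}

/-- Hahn–Banach-type supporting functional for semi-normed ℤ-modules. -/
theorem exists_support_functional {M : Type*} [AddCommGroup M] (ν : M → ℝ)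
    (hν0 : ∀ m : M, 0 ≤ ν m)
    (hνadd : ∀ u v : M, ν (u + v) ≤ ν u + ν v)
    (hνsmul : ∀ (n : ℤ) (u : M), ν (n • u) = |(n : ℝ)| * ν u)
    (m : M) :
    ∃ f : M →+ ℝ, (∀ x, |f x| ≤ ν x) ∧ f m = ν m := by
  have hν0' : ν 0 = 0 := by simpa using hνsmul 0 0
  have hνneg : ∀ x, ν (-x) = ν x := fun x => by simpa using hνsmul (-1) x
  -- "Good" sets: graphs of partial additive functionals dominated by ν, through (m, ν m)
  set S : Set (Set (M × ℝ)) :=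
    {Γ | (m, ν m) ∈ Γ ∧ (∀ p ∈ Γ, ∀ q ∈ Γ, p - q ∈ Γ) ∧ ∀ p ∈ Γ, p.2 ≤ ν p.1} with hSdef
  have hseed : {q : M × ℝ | ∃ n : ℤ, q = n • (m, ν m)} ∈ S := by
    refine ⟨⟨1, by simp⟩, ?_, ?_⟩
    · rintro p ⟨n, rfl⟩ q ⟨k, rfl⟩; exact ⟨n - k, by rw [sub_zsmul]; abel⟩
    · rintro p ⟨n, rfl⟩
      have h1 : ((n • ((m, ν m) : M × ℝ))).1 = n • m := rfl
      have h2 : ((n • ((m, ν m) : M × ℝ))).2 = (n : ℝ) * ν m := by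
        simp [zsmul_eq_mul]
      rw [h2, h1, hνsmul]
      exact mul_le_mul_of_nonneg_right (le_abs_self _) (hν0 m)
  have hchainub : ∀ c ⊆ S, IsChain (· ⊆ ·) c → c.Nonempty →
      ∃ ub ∈ S, ∀ s ∈ c, s ⊆ ub := by
    rintro c hcS hchain ⟨y, hy⟩
    refine ⟨⋃₀ c, ⟨⟨y, hy, (hcS hy).1⟩, ?_, ?_⟩, fun s hs => Set.subset_sUnion_of_mem hs⟩
    · rintro p ⟨A, hA, hpA⟩ q ⟨B, hB, hqB⟩
      rcases hchain.total hA hB with h | h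
      · exact ⟨B, hB, (hcS hB).2.1 p (h hpA) q hqB⟩
      · exact ⟨A, hA, (hcS hA).2.1 p hpA q (h hqB)⟩
    · rintro p ⟨A, hA, hpA⟩; exact (hcS hA).2.2 p hpA
  obtain ⟨Γ, -, hmax⟩ := zorn_subset_nonempty S hchainub _ hseed
  clear hseed hchainub
  obtain ⟨hΓm, hΓsub, hΓdom⟩ := hmax.1
  have h0 : (0 : M × ℝ) ∈ Γ := by simpa using hΓsub _ hΓm _ hΓm
  have hneg : ∀ p ∈ Γ, -p ∈ Γ := fun p hp => by simpa using hΓsub 0 h0 p hp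
  have hadd : ∀ p ∈ Γ, ∀ q ∈ Γ, p + q ∈ Γ := fun p hp q hq => by
    simpa [sub_neg_eq_add] using hΓsub p hp (-q) (hneg q hq)
  have hzsmul : ∀ (n : ℤ), ∀ p ∈ Γ, n • p ∈ Γ := by
    intro n p hp
    induction n using Int.induction_on with
    | zero => simpa using h0
    | succ k ih => rw [add_zsmul, one_zsmul]; exact hadd _ ih _ hp
    | pred k ih =>
        rw [sub_zsmul, one_zsmul]
        simpa [sub_eq_add_neg] using hΓsub _ ih _ hp
  have huniq : ∀ x r s, (x, r) ∈ Γ → (x, s) ∈ Γ → r = s := by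
    intro x r s hr hs
    have h1 : r - s ≤ ν (x - x) := hΓdom _ (hΓsub _ hr _ hs)
    have h2 : s - r ≤ ν (x - x) := hΓdom _ (hΓsub _ hs _ hr)
    rw [sub_self, hν0'] at h1 h2
    linarith
  -- totality of the maximal graph
  have hdom : ∀ x : M, ∃ r : ℝ, (x, r) ∈ Γ := by
    intro x
    by_contra hx
    push_neg at hx
    set U : Set ℝ :=
      {t | ∃ p ∈ Γ, ∃ n : ℤ, 0 < n ∧ t = (ν (p.1 + n • x) - p.2) / (n : ℝ)} with hUdef
    have hcross : ∀ p ∈ Γ, ∀ k : ℤ, 0 < k →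
        ∀ t ∈ U, (p.2 - ν (p.1 - k • x)) / (k : ℝ) ≤ t := by
      rintro ⟨y, r⟩ hp k hk t ⟨⟨y', r'⟩, hq, n, hn, rfl⟩
      have hmem := hΓdom _ (hadd _ (hzsmul n _ hp) _ (hzsmul k _ hq))
      have key : (n : ℝ) * r + (k : ℝ) * r' ≤ ν (n • y + k • y') := by
        simpa [zsmul_eq_mul] using hmem
      have heq : n • y + k • y' = n • (y - k • x) + k • (y' + n • x) := by
        simp only [smul_sub, smul_add, smul_smul]
        rw [mul_comm n k]; abel
      have hsplit : ν (n • y + k • y') ≤ (n : ℝ) * ν (y - k • x) + (k : ℝ) * ν (y' + n • x) := by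
        rw [heq]
        refine (hνadd _ _).trans ?_
        rw [hνsmul, hνsmul, abs_of_pos (by exact_mod_cast hn : (0:ℝ) < (n:ℝ)),
          abs_of_pos (by exact_mod_cast hk : (0:ℝ) < (k:ℝ))]
      rw [div_le_div_iff₀ (by exact_mod_cast hk) (by exact_mod_cast hn)]
      nlinarith [key, hsplit]
    have hUne : U.Nonempty := ⟨_, 0, h0, 1, one_pos, rfl⟩
    have hUbdd : BddBelow U := ⟨_, fun t ht => hcross 0 h0 1 one_pos t ht⟩
    set a : ℝ := sInf U with ha
    set Γ' : Set (M × ℝ) := {q | ∃ p ∈ Γ, ∃ n : ℤ, q = p + n • (x, a)} with hΓ'def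
    have hΓ'S : Γ' ∈ S := by
      refine ⟨⟨(m, ν m), hΓm, 0, by simp⟩, ?_, ?_⟩
      · rintro p ⟨u, hu, n, rfl⟩ q ⟨v, hv, j, rfl⟩
        exact ⟨u - v, hΓsub u hu v hv, n - j, by rw [sub_zsmul]; abel⟩
      · rintro q ⟨⟨y, r⟩, hp, n, rfl⟩
        have hc1 : (((y, r) : M × ℝ) + n • (x, a)).1 = y + n • x := rfl
        have hc2 : (((y, r) : M × ℝ) + n • (x, a)).2 = r + (n : ℝ) * a := by
          simp [zsmul_eq_mul]
        rw [hc1, hc2]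
        rcases lt_trichotomy n 0 with hn | hn | hn
        · have hk : 0 < -n := by omega
          have hle := le_csInf hUne (fun t ht => hcross (y, r) hp (-n) hk t ht)
          rw [div_le_iff₀ (by exact_mod_cast hk : (0:ℝ) < ((-n : ℤ) : ℝ))] at hle
          have hy : y + n • x = y - (-n) • x := by simp [neg_smul, sub_neg_eq_add]
          rw [hy]
          push_cast at hle ⊢
          nlinarith [hle]
        · subst hn; simpa using hΓdom _ hp
        · have hmem : (ν (y + n • x) - r) / (n : ℝ) ∈ U := ⟨(y, r), hp, n, hn, rfl⟩
          have hle := csInf_le hUbdd hmem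
          rw [le_div_iff₀ (by exact_mod_cast hn : (0:ℝ) < (n:ℝ))] at hle
          nlinarith [hle]
    have hΓ'Γ : Γ' ⊆ Γ := hmax.2 hΓ'S (fun p hp => ⟨p, hp, 0, by simp⟩)
    exact hx a (hΓ'Γ ⟨0, h0, 1, by simp⟩)
  choose g hg using hdom
  have hgu : ∀ x r, (x, r) ∈ Γ → g x = r := fun x r hr => huniq x (g x) r (hg x) hr
  have hgadd : ∀ u v : M, g (u + v) = g u + g v := by
    intro u v
    have : ((u, g u) : M × ℝ) + (v, g v) ∈ Γ := hadd _ (hg u) _ (hg v)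
    exact huniq (u + v) (g (u + v)) (g u + g v) (hg _) this
  refine ⟨AddMonoidHom.mk' g hgadd, ?_, ?_⟩
  · intro z
    have h1 : g z ≤ ν z := hΓdom _ (hg z)
    have h2 : -g z ≤ ν (-z) := hΓdom _ (hneg _ (hg z))
    rw [hνneg] at h2
    simpa [abs_le] using And.intro (by linarith : -ν z ≤ g z) h1
  · simpa using hgu m (ν m) hΓm

/-- For a semi-normed ℤ-module `M` the evaluation map `M → M''`,
`m ↦ (f ↦ f m)`, is isometric; if `ν` is a norm, it is injective (i.e. bounded
functionals separate points). -/
theorem eval_double_dual_isometric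
    {M : Type*} [AddCommGroup M] (ν : M → ℝ)
    (hν0 : ∀ m : M, 0 ≤ ν m)
    (hνadd : ∀ u v : M, ν (u + v) ≤ ν u + ν v)
    (hνsmul : ∀ (n : ℤ) (u : M), ν (n • u) = |(n : ℝ)| * ν u) :
    (∀ m : M, evalNorm ν m = ν m) ∧
    ((∀ m : M, ν m = 0 → m = 0) →
      ∀ m m' : M, (∀ f : M →+ ℝ, Bdd ν f → f m = f m') → m = m') := by
  have hbb : ∀ f : M →+ ℝ, BddBelow {c : ℝ | 0 ≤ c ∧ ∀ m : M, |f m| ≤ c * ν m} :=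
    fun f => ⟨0, fun d hd => hd.1⟩
  have opN_spec : ∀ f : M →+ ℝ, Bdd ν f → 0 ≤ opN ν f ∧ ∀ x, |f x| ≤ opN ν f * ν x := by
    intro f hf
    obtain ⟨c, hc0, hc⟩ := hf
    have hne : {c : ℝ | 0 ≤ c ∧ ∀ m : M, |f m| ≤ c * ν m}.Nonempty := ⟨c, hc0, hc⟩
    have h0 : 0 ≤ opN ν f := le_csInf hne fun d hd => hd.1
    refine ⟨h0, fun x => ?_⟩
    rcases eq_or_lt_of_le (hν0 x) with hx | hx
    · have h1 : |f x| ≤ 0 := by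
        have := hc x; rw [← hx, mul_zero] at this; exact this
      rw [← hx, mul_zero]; exact h1
    · rw [← div_le_iff₀ hx]
      exact le_csInf hne fun d hd => (div_le_iff₀ hx).mpr (hd.2 x)
  have hbbE : ∀ m : M,
      BddBelow {c : ℝ | 0 ≤ c ∧ ∀ f : M →+ ℝ, Bdd ν f → |f m| ≤ c * opN ν f} :=
    fun m => ⟨0, fun d hd => hd.1⟩
  have hmemE : ∀ m : M,
      ν m ∈ {c : ℝ | 0 ≤ c ∧ ∀ f : M →+ ℝ, Bdd ν f → |f m| ≤ c * opN ν f} := by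
    intro m
    refine ⟨hν0 m, fun f hf => ?_⟩
    have := (opN_spec f hf).2 m
    calc |f m| ≤ opN ν f * ν m := this
      _ = ν m * opN ν f := mul_comm _ _
  have hsupp : ∀ m : M, ∃ f : M →+ ℝ, Bdd ν f ∧ opN ν f ≤ 1 ∧ f m = ν m := by
    intro m
    obtain ⟨f, hfb, hfm⟩ := exists_support_functional ν hν0 hνadd hνsmul m
    have hmem1 : (1 : ℝ) ∈ {c : ℝ | 0 ≤ c ∧ ∀ m : M, |f m| ≤ c * ν m} :=
      ⟨zero_le_one, fun x => by simpa using hfb x⟩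
    exact ⟨f, ⟨1, hmem1⟩, csInf_le (hbb f) hmem1, hfm⟩
  have hiso : ∀ m : M, evalNorm ν m = ν m := by
    intro m
    refine le_antisymm (csInf_le (hbbE m) (hmemE m)) (le_csInf ⟨ν m, hmemE m⟩ ?_)
    rintro c ⟨hc0, hc⟩
    obtain ⟨f, hfB, hop1, hfm⟩ := hsupp m
    have h1 := hc f hfB
    have h2 : |f m| = ν m := by rw [hfm]; exact abs_of_nonneg (hν0 m)
    have h3 : 0 ≤ opN ν f := (opN_spec f hfB).1
    nlinarith [h1, h2]
  refine ⟨hiso, ?_⟩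
  intro hnorm m m' hff
  obtain ⟨f, hfB, hop1, hfm⟩ := hsupp (m - m')
  have h0 : f (m - m') = 0 := by
    rw [map_sub, hff f hfB, sub_self]
  have : ν (m - m') = 0 := by rw [← hfm, h0]
  have := hnorm _ this
  exact sub_eq_zero.mp this
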